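/- The group presented by generators x, y subject to the relations x^5 = y^3 = (xy)^2 = 1 is isomorphic to the alternating group A_5. -/

import Mathlib

/-- The relations `x⁵ = y³ = (xy)² = 1` for the presentation `⟨x, y ∣ x⁵, y³, (xy)²⟩`,
written as elements of the free group on two generators. -/
def rels : Set (FreeGroup (Fin 2)) :=
  {(FreeGroup.of 0) ^ 5, (FreeGroup.of 1) ^ 3, (FreeGroup.of 0 * FreeGroup.of 1) ^ 2}

namespace A5Pres

abbrev P := PresentedGroup rels

def x : P := PresentedGroup.of 0
def y : P := PresentedGroup.of 1

lemma rel_one {r : FreeGroup (Fin 2)} (h : r ∈ rels) : PresentedGroup.mk rels r = 1 :=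
  (QuotientGroup.eq_one_iff _).mpr (Subgroup.subset_normalClosure h)

lemma hx5 : x ^ 5 = 1 := by
  have := rel_one (show (FreeGroup.of 0) ^ 5 ∈ rels by simp [rels])
  simpa [x, PresentedGroup.of] using this

lemma hy3 : y ^ 3 = 1 := by
  have := rel_one (show (FreeGroup.of 1) ^ 3 ∈ rels by simp [rels])
  simpa [y, PresentedGroup.of] using this

lemma hxyxy : (x * y) ^ 2 = 1 := by
  have := rel_one (show (FreeGroup.of 0 * FreeGroup.of 1) ^ 2 ∈ rels by simp [rels])
  simpa [x, y, PresentedGroup.of] using this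

lemma hx5w (w : P) : x * (x * (x * (x * (x * w)))) = w := by
  rw [show x * (x * (x * (x * (x * w)))) = x ^ 5 * w by simp only [pow_succ, pow_zero, one_mul, mul_assoc], hx5, one_mul]

lemma hy3w (w : P) : y * (y * (y * w)) = w := by
  rw [show y * (y * (y * w)) = y ^ 3 * w by simp only [pow_succ, pow_zero, one_mul, mul_assoc], hy3, one_mul]

lemma hxyxyw (w : P) : x * (y * (x * (y * w))) = w := by
  rw [show x * (y * (x * (y * w))) = (x * y) ^ 2 * w by simp only [pow_succ, pow_zero, one_mul, mul_assoc], hxyxy, one_mul]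

lemma R1 (w : P) : y * (y * (y * w)) = w := hy3w w

lemma R2 (w : P) : x * (x * (x * (x * w))) = y * (x * (y * w)) := by
  conv_lhs => rw [← hxyxyw (w)]
  conv_lhs => rw [hx5w (y * (x * (y * w)))]

lemma R3 (w : P) : x * (y * (x * w)) = y * (y * w) := by
  conv_lhs => rw [← hy3w (w)]
  conv_lhs => rw [hxyxyw (y * (y * w))]

lemma R4 (w : P) : y * (x * (y * (y * (x * w)))) = x * (x * (x * (y * (y * w))))  := by
  conv_lhs => rw [← R2 (y * (x * w))]
  conv_lhs => rw [R3 (w)]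

lemma R5 (w : P) : y * (y * (x * (x * (x * w)))) = x * (y * (y * (x * (y * w)))) := by
  conv_lhs => rw [← R3 (x * (x * (x * w)))]
  conv_lhs => rw [R2 (w)]

lemma R6 (w : P) : y * (x * (x * (y * (y * (x * (y * w)))))) = x * (x * (x * (y * (y * (x * (x * w)))))) := by
  conv_lhs => rw [← R5 (w)]
  conv_lhs => rw [R4 (x * (x * w))]

lemma R7 (w : P) : x * (x * (x * (y * (y * (x * (x * (y * (y * w)))))))) = y * (x * (x * (y * (y * (x * w))))) := by
  conv_lhs => rw [← R6 (y * (y * w))]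
  conv_lhs => rw [hy3w (w)]

lemma R8 (w : P) : y * (y * (x * (x * (y * (y * (x * (x * (y * (y * w))))))))) = x * (y * (y * (x * (x * (y * (y * (x * w))))))) := by
  conv_lhs => rw [← R3 (x * (x * (y * (y * (x * (x * (y * (y * w))))))))]
  conv_lhs => rw [R7 (w)]

lemma R9 (w : P) : y * (x * (x * (y * (y * (x * (x * (y * (y * (x * w))))))))) = x * (y * (y * (x * (x * (y * (y * (x * (x * (y * w))))))))) := by
  conv_lhs => rw [← hy3w (y * (x * (x * (y * (y * (x * (x * (y * (y * (x * w))))))))))]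
  conv_lhs => rw [← hy3w (w)]
  conv_lhs => rw [R8 (x * (y * (y * (y * w))))]
  conv_lhs => rw [R8 (y * w)]
  conv_lhs => rw [R8 (x * (y * w))]

lemma R10 (w : P) : x * (x * (y * (y * (x * (x * (y * (y * (x * (x * w))))))))) = y * (x * (x * (y * (y * (x * (x * (y * w))))))) := by
  conv_lhs => rw [← hy3w (w)]
  conv_lhs => rw [R8 (y * w)]
  conv_lhs => rw [R7 (x * (y * w))]

lemma E1 : y * (y * y) = 1 := by simpa using R1 1
lemma E2 : x * (x * (x * x)) = y * (x * y) := by simpa using R2 1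
lemma E3 : x * (y * x) = y * y := by simpa using R3 1
lemma E4 : y * (x * (y * (y * x))) = x * (x * (x * (y * y))) := by simpa using R4 1
lemma E5 : y * (y * (x * (x * x))) = x * (y * (y * (x * y))) := by simpa using R5 1
lemma E6 : y * (x * (x * (y * (y * (x * y))))) = x * (x * (x * (y * (y * (x * x))))) := by simpa using R6 1
lemma E7 : x * (x * (x * (y * (y * (x * (x * (y * y))))))) = y * (x * (x * (y * (y * x)))) := by simpa using R7 1
lemma E8 : y * (y * (x * (x * (y * (y * (x * (x * (y * y)))))))) = x * (y * (y * (x * (x * (y * (y * x)))))) := by simpa using R8 1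
lemma E9 : y * (x * (x * (y * (y * (x * (x * (y * (y * x)))))))) = x * (y * (y * (x * (x * (y * (y * (x * (x * y)))))))) := by simpa using R9 1
lemma E10 : x * (x * (y * (y * (x * (x * (y * (y * (x * x)))))))) = y * (x * (x * (y * (y * (x * (x * y)))))) := by simpa using R10 1

def T : ℕ → P
  | 0 => 1
  | 1 => y
  | 2 => y * x
  | 3 => y * x * x
  | 4 => y * x * x * x
  | 5 => y * x * x * y
  | 6 => y * x * x * x * y
  | 7 => y * x * x * y * y
  | 8 => y * x * x * x * y * y
  | 9 => y * x * x * x * y * y * x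
  | 10 => y * x * x * x * y * y * x * x
  | 11 => y * x * x * x * y * y * x * x * y
  | _ => 1

lemma stepx : ∀ t : ℕ, t < 12 → ∃ j t' : ℕ, t' < 12 ∧ T t * x = x ^ j * T t' := by
  intro t ht
  interval_cases t
  · exact ⟨1, 0, by norm_num, by simp only [T, pow_succ, pow_zero, one_mul, mul_one, mul_assoc, R1, R2, R3, R4, R5, R6, R7, R8, R9, R10, E1, E2, E3, E4, E5, E6, E7, E8, E9, E10]⟩
  · exact ⟨0, 2, by norm_num, by simp only [T, pow_succ, pow_zero, one_mul, mul_one, mul_assoc, R1, R2, R3, R4, R5, R6, R7, R8, R9, R10, E1, E2, E3, E4, E5, E6, E7, E8, E9, E10]⟩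
  · exact ⟨0, 3, by norm_num, by simp only [T, pow_succ, pow_zero, one_mul, mul_one, mul_assoc, R1, R2, R3, R4, R5, R6, R7, R8, R9, R10, E1, E2, E3, E4, E5, E6, E7, E8, E9, E10]⟩
  · exact ⟨0, 4, by norm_num, by simp only [T, pow_succ, pow_zero, one_mul, mul_one, mul_assoc, R1, R2, R3, R4, R5, R6, R7, R8, R9, R10, E1, E2, E3, E4, E5, E6, E7, E8, E9, E10]⟩
  · exact ⟨1, 5, by norm_num, by simp only [T, pow_succ, pow_zero, one_mul, mul_one, mul_assoc, R1, R2, R3, R4, R5, R6, R7, R8, R9, R10, E1, E2, E3, E4, E5, E6, E7, E8, E9, E10]⟩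
  · exact ⟨4, 1, by norm_num, by simp only [T, pow_succ, pow_zero, one_mul, mul_one, mul_assoc, R1, R2, R3, R4, R5, R6, R7, R8, R9, R10, E1, E2, E3, E4, E5, E6, E7, E8, E9, E10]⟩
  · exact ⟨0, 7, by norm_num, by simp only [T, pow_succ, pow_zero, one_mul, mul_one, mul_assoc, R1, R2, R3, R4, R5, R6, R7, R8, R9, R10, E1, E2, E3, E4, E5, E6, E7, E8, E9, E10]⟩
  · exact ⟨4, 8, by norm_num, by simp only [T, pow_succ, pow_zero, one_mul, mul_one, mul_assoc, R1, R2, R3, R4, R5, R6, R7, R8, R9, R10, E1, E2, E3, E4, E5, E6, E7, E8, E9, E10]⟩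
  · exact ⟨0, 9, by norm_num, by simp only [T, pow_succ, pow_zero, one_mul, mul_one, mul_assoc, R1, R2, R3, R4, R5, R6, R7, R8, R9, R10, E1, E2, E3, E4, E5, E6, E7, E8, E9, E10]⟩
  · exact ⟨0, 10, by norm_num, by simp only [T, pow_succ, pow_zero, one_mul, mul_one, mul_assoc, R1, R2, R3, R4, R5, R6, R7, R8, R9, R10, E1, E2, E3, E4, E5, E6, E7, E8, E9, E10]⟩
  · exact ⟨1, 6, by norm_num, by simp only [T, pow_succ, pow_zero, one_mul, mul_one, mul_assoc, R1, R2, R3, R4, R5, R6, R7, R8, R9, R10, E1, E2, E3, E4, E5, E6, E7, E8, E9, E10]⟩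
  · exact ⟨4, 11, by norm_num, by simp only [T, pow_succ, pow_zero, one_mul, mul_one, mul_assoc, R1, R2, R3, R4, R5, R6, R7, R8, R9, R10, E1, E2, E3, E4, E5, E6, E7, E8, E9, E10]⟩

lemma stepy : ∀ t : ℕ, t < 12 → ∃ j t' : ℕ, t' < 12 ∧ T t * y = x ^ j * T t' := by
  intro t ht
  interval_cases t
  · exact ⟨0, 1, by norm_num, by simp only [T, pow_succ, pow_zero, one_mul, mul_one, mul_assoc, R1, R2, R3, R4, R5, R6, R7, R8, R9, R10, E1, E2, E3, E4, E5, E6, E7, E8, E9, E10]⟩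
  · exact ⟨1, 2, by norm_num, by simp only [T, pow_succ, pow_zero, one_mul, mul_one, mul_assoc, R1, R2, R3, R4, R5, R6, R7, R8, R9, R10, E1, E2, E3, E4, E5, E6, E7, E8, E9, E10]⟩
  · exact ⟨4, 0, by norm_num, by simp only [T, pow_succ, pow_zero, one_mul, mul_one, mul_assoc, R1, R2, R3, R4, R5, R6, R7, R8, R9, R10, E1, E2, E3, E4, E5, E6, E7, E8, E9, E10]⟩
  · exact ⟨0, 5, by norm_num, by simp only [T, pow_succ, pow_zero, one_mul, mul_one, mul_assoc, R1, R2, R3, R4, R5, R6, R7, R8, R9, R10, E1, E2, E3, E4, E5, E6, E7, E8, E9, E10]⟩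
  · exact ⟨0, 6, by norm_num, by simp only [T, pow_succ, pow_zero, one_mul, mul_one, mul_assoc, R1, R2, R3, R4, R5, R6, R7, R8, R9, R10, E1, E2, E3, E4, E5, E6, E7, E8, E9, E10]⟩
  · exact ⟨0, 7, by norm_num, by simp only [T, pow_succ, pow_zero, one_mul, mul_one, mul_assoc, R1, R2, R3, R4, R5, R6, R7, R8, R9, R10, E1, E2, E3, E4, E5, E6, E7, E8, E9, E10]⟩
  · exact ⟨0, 8, by norm_num, by simp only [T, pow_succ, pow_zero, one_mul, mul_one, mul_assoc, R1, R2, R3, R4, R5, R6, R7, R8, R9, R10, E1, E2, E3, E4, E5, E6, E7, E8, E9, E10]⟩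
  · exact ⟨0, 3, by norm_num, by simp only [T, pow_succ, pow_zero, one_mul, mul_one, mul_assoc, R1, R2, R3, R4, R5, R6, R7, R8, R9, R10, E1, E2, E3, E4, E5, E6, E7, E8, E9, E10]⟩
  · exact ⟨0, 4, by norm_num, by simp only [T, pow_succ, pow_zero, one_mul, mul_one, mul_assoc, R1, R2, R3, R4, R5, R6, R7, R8, R9, R10, E1, E2, E3, E4, E5, E6, E7, E8, E9, E10]⟩
  · exact ⟨4, 10, by norm_num, by simp only [T, pow_succ, pow_zero, one_mul, mul_one, mul_assoc, R1, R2, R3, R4, R5, R6, R7, R8, R9, R10, E1, E2, E3, E4, E5, E6, E7, E8, E9, E10]⟩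
  · exact ⟨0, 11, by norm_num, by simp only [T, pow_succ, pow_zero, one_mul, mul_one, mul_assoc, R1, R2, R3, R4, R5, R6, R7, R8, R9, R10, E1, E2, E3, E4, E5, E6, E7, E8, E9, E10]⟩
  · exact ⟨1, 9, by norm_num, by simp only [T, pow_succ, pow_zero, one_mul, mul_one, mul_assoc, R1, R2, R3, R4, R5, R6, R7, R8, R9, R10, E1, E2, E3, E4, E5, E6, E7, E8, E9, E10]⟩

lemma stepx_inv : ∀ t : ℕ, t < 12 → ∃ j t' : ℕ, t' < 12 ∧ T t' * x = x ^ j * T t := by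
  intro t ht
  interval_cases t
  · exact ⟨1, 0, by norm_num, by simp only [T, pow_succ, pow_zero, one_mul, mul_one, mul_assoc, R1, R2, R3, R4, R5, R6, R7, R8, R9, R10, E1, E2, E3, E4, E5, E6, E7, E8, E9, E10]⟩
  · exact ⟨4, 5, by norm_num, by simp only [T, pow_succ, pow_zero, one_mul, mul_one, mul_assoc, R1, R2, R3, R4, R5, R6, R7, R8, R9, R10, E1, E2, E3, E4, E5, E6, E7, E8, E9, E10]⟩
  · exact ⟨0, 1, by norm_num, by simp only [T, pow_succ, pow_zero, one_mul, mul_one, mul_assoc, R1, R2, R3, R4, R5, R6, R7, R8, R9, R10, E1, E2, E3, E4, E5, E6, E7, E8, E9, E10]⟩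
  · exact ⟨0, 2, by norm_num, by simp only [T, pow_succ, pow_zero, one_mul, mul_one, mul_assoc, R1, R2, R3, R4, R5, R6, R7, R8, R9, R10, E1, E2, E3, E4, E5, E6, E7, E8, E9, E10]⟩
  · exact ⟨0, 3, by norm_num, by simp only [T, pow_succ, pow_zero, one_mul, mul_one, mul_assoc, R1, R2, R3, R4, R5, R6, R7, R8, R9, R10, E1, E2, E3, E4, E5, E6, E7, E8, E9, E10]⟩
  · exact ⟨1, 4, by norm_num, by simp only [T, pow_succ, pow_zero, one_mul, mul_one, mul_assoc, R1, R2, R3, R4, R5, R6, R7, R8, R9, R10, E1, E2, E3, E4, E5, E6, E7, E8, E9, E10]⟩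
  · exact ⟨1, 10, by norm_num, by simp only [T, pow_succ, pow_zero, one_mul, mul_one, mul_assoc, R1, R2, R3, R4, R5, R6, R7, R8, R9, R10, E1, E2, E3, E4, E5, E6, E7, E8, E9, E10]⟩
  · exact ⟨0, 6, by norm_num, by simp only [T, pow_succ, pow_zero, one_mul, mul_one, mul_assoc, R1, R2, R3, R4, R5, R6, R7, R8, R9, R10, E1, E2, E3, E4, E5, E6, E7, E8, E9, E10]⟩
  · exact ⟨4, 7, by norm_num, by simp only [T, pow_succ, pow_zero, one_mul, mul_one, mul_assoc, R1, R2, R3, R4, R5, R6, R7, R8, R9, R10, E1, E2, E3, E4, E5, E6, E7, E8, E9, E10]⟩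
  · exact ⟨0, 8, by norm_num, by simp only [T, pow_succ, pow_zero, one_mul, mul_one, mul_assoc, R1, R2, R3, R4, R5, R6, R7, R8, R9, R10, E1, E2, E3, E4, E5, E6, E7, E8, E9, E10]⟩
  · exact ⟨0, 9, by norm_num, by simp only [T, pow_succ, pow_zero, one_mul, mul_one, mul_assoc, R1, R2, R3, R4, R5, R6, R7, R8, R9, R10, E1, E2, E3, E4, E5, E6, E7, E8, E9, E10]⟩
  · exact ⟨4, 11, by norm_num, by simp only [T, pow_succ, pow_zero, one_mul, mul_one, mul_assoc, R1, R2, R3, R4, R5, R6, R7, R8, R9, R10, E1, E2, E3, E4, E5, E6, E7, E8, E9, E10]⟩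

lemma stepy_inv : ∀ t : ℕ, t < 12 → ∃ j t' : ℕ, t' < 12 ∧ T t' * y = x ^ j * T t := by
  intro t ht
  interval_cases t
  · exact ⟨4, 2, by norm_num, by simp only [T, pow_succ, pow_zero, one_mul, mul_one, mul_assoc, R1, R2, R3, R4, R5, R6, R7, R8, R9, R10, E1, E2, E3, E4, E5, E6, E7, E8, E9, E10]⟩
  · exact ⟨0, 0, by norm_num, by simp only [T, pow_succ, pow_zero, one_mul, mul_one, mul_assoc, R1, R2, R3, R4, R5, R6, R7, R8, R9, R10, E1, E2, E3, E4, E5, E6, E7, E8, E9, E10]⟩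
  · exact ⟨1, 1, by norm_num, by simp only [T, pow_succ, pow_zero, one_mul, mul_one, mul_assoc, R1, R2, R3, R4, R5, R6, R7, R8, R9, R10, E1, E2, E3, E4, E5, E6, E7, E8, E9, E10]⟩
  · exact ⟨0, 7, by norm_num, by simp only [T, pow_succ, pow_zero, one_mul, mul_one, mul_assoc, R1, R2, R3, R4, R5, R6, R7, R8, R9, R10, E1, E2, E3, E4, E5, E6, E7, E8, E9, E10]⟩
  · exact ⟨0, 8, by norm_num, by simp only [T, pow_succ, pow_zero, one_mul, mul_one, mul_assoc, R1, R2, R3, R4, R5, R6, R7, R8, R9, R10, E1, E2, E3, E4, E5, E6, E7, E8, E9, E10]⟩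
  · exact ⟨0, 3, by norm_num, by simp only [T, pow_succ, pow_zero, one_mul, mul_one, mul_assoc, R1, R2, R3, R4, R5, R6, R7, R8, R9, R10, E1, E2, E3, E4, E5, E6, E7, E8, E9, E10]⟩
  · exact ⟨0, 4, by norm_num, by simp only [T, pow_succ, pow_zero, one_mul, mul_one, mul_assoc, R1, R2, R3, R4, R5, R6, R7, R8, R9, R10, E1, E2, E3, E4, E5, E6, E7, E8, E9, E10]⟩
  · exact ⟨0, 5, by norm_num, by simp only [T, pow_succ, pow_zero, one_mul, mul_one, mul_assoc, R1, R2, R3, R4, R5, R6, R7, R8, R9, R10, E1, E2, E3, E4, E5, E6, E7, E8, E9, E10]⟩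
  · exact ⟨0, 6, by norm_num, by simp only [T, pow_succ, pow_zero, one_mul, mul_one, mul_assoc, R1, R2, R3, R4, R5, R6, R7, R8, R9, R10, E1, E2, E3, E4, E5, E6, E7, E8, E9, E10]⟩
  · exact ⟨1, 11, by norm_num, by simp only [T, pow_succ, pow_zero, one_mul, mul_one, mul_assoc, R1, R2, R3, R4, R5, R6, R7, R8, R9, R10, E1, E2, E3, E4, E5, E6, E7, E8, E9, E10]⟩
  · exact ⟨4, 9, by norm_num, by simp only [T, pow_succ, pow_zero, one_mul, mul_one, mul_assoc, R1, R2, R3, R4, R5, R6, R7, R8, R9, R10, E1, E2, E3, E4, E5, E6, E7, E8, E9, E10]⟩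
  · exact ⟨0, 10, by norm_num, by simp only [T, pow_succ, pow_zero, one_mul, mul_one, mul_assoc, R1, R2, R3, R4, R5, R6, R7, R8, R9, R10, E1, E2, E3, E4, E5, E6, E7, E8, E9, E10]⟩

lemma cover (p : P) : ∃ (k : ℤ) (t : ℕ), t < 12 ∧ p = x ^ k * T t := by
  obtain ⟨wd, rfl⟩ := PresentedGroup.mk_surjective rels p
  suffices h : ∀ w : FreeGroup (Fin 2), ∀ q : P,
      (∃ (k : ℤ) (t : ℕ), t < 12 ∧ q = x ^ k * T t) →
      (∃ (k : ℤ) (t : ℕ), t < 12 ∧ q * PresentedGroup.mk rels w = x ^ k * T t) by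
    have := h wd 1 ⟨0, 0, by norm_num, by simp [T]⟩
    simpa using this
  intro w
  induction w using FreeGroup.induction_on with
  | C1 => intro q hq; simpa using hq
  | of i =>
      fin_cases i
      · rintro q ⟨k, t, ht, rfl⟩
        obtain ⟨j, t', ht', hs⟩ := stepx t ht
        refine ⟨k + j, t', ht', ?_⟩
        show x ^ k * T t * x = x ^ (k + (j : ℤ)) * T t'
        rw [mul_assoc, hs, ← mul_assoc, ← zpow_natCast x j, ← zpow_add]
      · rintro q ⟨k, t, ht, rfl⟩
        obtain ⟨j, t', ht', hs⟩ := stepy t ht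
        refine ⟨k + j, t', ht', ?_⟩
        show x ^ k * T t * y = x ^ (k + (j : ℤ)) * T t'
        rw [mul_assoc, hs, ← mul_assoc, ← zpow_natCast x j, ← zpow_add]
  | inv_of i ih =>
      intro q hq
      fin_cases i
      · obtain ⟨k, t, ht, rfl⟩ := hq
        obtain ⟨j, t', ht', hs⟩ := stepx_inv t ht
        have h3 : (x : P) ^ (-(j : ℤ)) * (T t' * x) = T t := by
          rw [hs, ← mul_assoc, ← zpow_natCast x j, ← zpow_add, neg_add_cancel, zpow_zero, one_mul]
        have h2 : T t * x⁻¹ = x ^ (-(j : ℤ)) * T t' := by rw [← h3]; group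
        refine ⟨k + -(j : ℤ), t', ht', ?_⟩
        show x ^ k * T t * x⁻¹ = x ^ (k + -(j : ℤ)) * T t'
        rw [mul_assoc, h2, ← mul_assoc, ← zpow_add]
      · obtain ⟨k, t, ht, rfl⟩ := hq
        obtain ⟨j, t', ht', hs⟩ := stepy_inv t ht
        have h3 : (x : P) ^ (-(j : ℤ)) * (T t' * x) * x⁻¹ * y = x ^ (-(j : ℤ)) * T t' * (x * x⁻¹) * y := by
          group
        have h4 : (x : P) ^ (-(j : ℤ)) * (T t' * y) = T t := by
          rw [hs, ← mul_assoc, ← zpow_natCast x j, ← zpow_add, neg_add_cancel, zpow_zero, one_mul]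
        have h2 : T t * y⁻¹ = x ^ (-(j : ℤ)) * T t' := by rw [← h4]; group
        refine ⟨k + -(j : ℤ), t', ht', ?_⟩
        show x ^ k * T t * y⁻¹ = x ^ (k + -(j : ℤ)) * T t'
        rw [mul_assoc, h2, ← mul_assoc, ← zpow_add]
  | mul u v ihu ihv =>
      intro q hq
      rw [map_mul, ← mul_assoc]
      exact ihv _ (ihu _ hq)

def F : Fin 5 × Fin 12 → P := fun kt => x ^ (kt.1 : ℕ) * T (kt.2 : ℕ)

lemma F_surj : Function.Surjective F := by
  intro p
  obtain ⟨k, t, ht, rfl⟩ := cover p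
  have hk0 : 0 ≤ k % 5 := Int.emod_nonneg k (by norm_num)
  have hk5 : k % 5 < 5 := Int.emod_lt_of_pos k (by norm_num)
  refine ⟨(⟨(k % 5).toNat, by omega⟩, ⟨t, ht⟩), ?_⟩
  show x ^ ((k % 5).toNat) * T t = x ^ k * T t
  congr 1
  have h5 : (x : P) ^ (5 : ℤ) = 1 := by
    rw [show (5 : ℤ) = ((5 : ℕ) : ℤ) from rfl, zpow_natCast, hx5]
  calc x ^ ((k % 5).toNat) = x ^ (k % 5) := by
        rw [← zpow_natCast, Int.toNat_of_nonneg hk0]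
    _ = x ^ (k % 5) * (x ^ (5 : ℤ)) ^ (k / 5) := by rw [h5, one_zpow, mul_one]
    _ = x ^ k := by rw [← zpow_mul, ← zpow_add, Int.emod_add_mul_ediv]

lemma finiteP : Finite P := Finite.of_surjective F F_surj

lemma cardP_le : Nat.card P ≤ 60 := by
  have := Nat.card_le_card_of_surjective F F_surj
  simpa using this
def ap : Equiv.Perm (Fin 5) := finRotate 5

def bp : Equiv.Perm (Fin 5) :=
  ⟨![0, 4, 1, 3, 2], ![0, 2, 4, 3, 1], by decide, by decide⟩

def a : alternatingGroup (Fin 5) := ⟨ap, by rw [Equiv.Perm.mem_alternatingGroup]; decide⟩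
def b : alternatingGroup (Fin 5) := ⟨bp, by rw [Equiv.Perm.mem_alternatingGroup]; decide⟩

def f : Fin 2 → alternatingGroup (Fin 5) := ![a, b]

lemma ha5 : a ^ 5 = 1 := by
  apply Subtype.ext
  show ap ^ 5 = 1
  decide

lemma hb3 : b ^ 3 = 1 := by
  apply Subtype.ext
  show bp ^ 3 = 1
  decide

lemma hab2 : (a * b) ^ 2 = 1 := by
  apply Subtype.ext
  show (ap * bp) ^ 2 = 1
  decide

lemma hrels : ∀ r ∈ rels, FreeGroup.lift f r = 1 := by
  intro r hr
  simp only [rels, Set.mem_insert_iff, Set.mem_singleton_iff] at hr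
  rcases hr with rfl | rfl | rfl
  · simpa [f] using ha5
  · simpa [f] using hb3
  · simpa [f] using hab2

def φ : P →* alternatingGroup (Fin 5) := PresentedGroup.toGroup hrels

lemma φx : φ x = a := by
  rw [show φ x = PresentedGroup.toGroup hrels (PresentedGroup.of 0) from rfl,
    PresentedGroup.toGroup.of]
  simp [f]

lemma φy : φ y = b := by
  rw [show φ y = PresentedGroup.toGroup hrels (PresentedGroup.of 1) from rfl,
    PresentedGroup.toGroup.of]
  simp [f]

lemma cardA5 : Nat.card (alternatingGroup (Fin 5)) = 60 := by
  have h := two_mul_card_alternatingGroup (α := Fin 5)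
  have h2 : Fintype.card (Equiv.Perm (Fin 5)) = 120 := by
    rw [Fintype.card_perm, Fintype.card_fin]
    decide
  rw [Nat.card_eq_fintype_card]
  omega

lemma orderOf_a : orderOf a = 5 := by
  haveI : Fact (Nat.Prime 5) := ⟨by norm_num⟩
  refine orderOf_eq_prime ha5 ?_
  intro h
  have : ap = 1 := congrArg Subtype.val h
  exact absurd this (by decide)

lemma orderOf_b : orderOf b = 3 := by
  haveI : Fact (Nat.Prime 3) := ⟨by norm_num⟩
  refine orderOf_eq_prime hb3 ?_
  intro h
  have : bp = 1 := congrArg Subtype.val h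
  exact absurd this (by decide)

lemma orderOf_ab : orderOf (a * b) = 2 := by
  haveI : Fact (Nat.Prime 2) := ⟨by norm_num⟩
  refine orderOf_eq_prime hab2 ?_
  intro h
  have : ap * bp = 1 := congrArg Subtype.val h
  exact absurd this (by decide)

lemma dvd_card {K : Subgroup (alternatingGroup (Fin 5))} {g : alternatingGroup (Fin 5)}
    (hg : g ∈ K) : orderOf g ∣ Nat.card K := by
  have h := orderOf_dvd_natCard (G := K) (x := ⟨g, hg⟩)
  rwa [Subgroup.orderOf_mk] at h

lemma φ_surj : Function.Surjective φ := by
  rw [← MonoidHom.range_eq_top]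
  set K := φ.range with hK
  have ha : a ∈ K := ⟨x, φx⟩
  have hb : b ∈ K := ⟨y, φy⟩
  have hab : a * b ∈ K := mul_mem ha hb
  have h5 : 5 ∣ Nat.card K := by have := dvd_card ha; rwa [orderOf_a] at this
  have h3 : 3 ∣ Nat.card K := by have := dvd_card hb; rwa [orderOf_b] at this
  have h2 : 2 ∣ Nat.card K := by have := dvd_card hab; rwa [orderOf_ab] at this
  have hdvd : Nat.card K ∣ 60 := cardA5 ▸ Subgroup.card_subgroup_dvd_card K
  have hpos : 0 < Nat.card K := Nat.card_pos
  have hle : Nat.card K ≤ 60 := Nat.le_of_dvd (by norm_num) hdvd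
  have h30 : Nat.card K = 30 ∨ Nat.card K = 60 := by omega
  rcases h30 with h30 | h60
  · exfalso
    have hidx : K.index = 2 := by
      have := Subgroup.card_mul_index K
      rw [h30, cardA5] at this
      omega
    have hnorm : K.Normal := by
      constructor
      intro n hn g
      have h1 : g * n * g⁻¹ ∈ K ↔ ((g ∈ K ↔ n ∈ K) ↔ g⁻¹ ∈ K) := by
        rw [Subgroup.mul_mem_iff_of_index_two hidx, Subgroup.mul_mem_iff_of_index_two hidx]
      rw [h1, Subgroup.inv_mem_iff]
      tauto
    rcases (alternatingGroup.isSimpleGroup_five.eq_bot_or_eq_top_of_normal K hnorm) with hbot | htop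
    · rw [hbot] at h30; simp at h30
    · rw [htop] at h30
      have : Nat.card (⊤ : Subgroup (alternatingGroup (Fin 5))) = 60 := by
        rw [← cardA5]
        exact Nat.card_congr Subgroup.topEquiv.toEquiv
      omega
  · exact Subgroup.eq_top_of_card_eq K (by rw [h60, cardA5])

end A5Pres

/-- The group presented by `⟨x, y ∣ x⁵ = y³ = (xy)² = 1⟩` is isomorphic to the
alternating group `A₅` on 5 letters. -/
theorem presented_group_iso_A5 :
    Nonempty (PresentedGroup rels ≃* alternatingGroup (Fin 5)) := by
  haveI : Finite A5Pres.P := A5Pres.finiteP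
  have hbij : Function.Bijective A5Pres.φ := by
    apply A5Pres.φ_surj.bijective_of_nat_card_le
    rw [A5Pres.cardA5]
    exact A5Pres.cardP_le
  exact ⟨MulEquiv.ofBijective A5Pres.φ hbij⟩
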